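/- Let d be a positive integer, κ > 0, and y ∈ ℝ^d. For i ∈ [d] let C^i = {+dκ·𝟏_i, −dκ·𝟏_i}. Then ∑_{i=1}^d cost_{C^i,2}(y) = (d³ − d²)·κ² + d·‖y − κ·sgn(y)‖₂². -/

import Mathlib

open scoped BigOperators

/-- `sgn v = 1` if `v ≥ 0` and `-1` if `v < 0`. -/
noncomputable def sgn (v : ℝ) : ℝ := if 0 ≤ v then 1 else -1

/-- Coordinatewise sign of a vector in Euclidean space. -/
noncomputable def sgnVecE {d : ℕ} (y : EuclideanSpace ℝ (Fin d)) : EuclideanSpace ℝ (Fin d) :=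
  WithLp.toLp 2 (fun i => sgn (y i))

/-- The `k`-means cost query in the Euclidean metric: `cost_{C,2}(x) = min_{c ∈ C} ‖x - c‖₂²`. -/
noncomputable def costE {d k : ℕ} (C : Fin k → EuclideanSpace ℝ (Fin d))
    (x : EuclideanSpace ℝ (Fin d)) : ℝ :=
  ⨅ j : Fin k, ‖x - C j‖ ^ 2

lemma normsq {d : ℕ} (x : EuclideanSpace ℝ (Fin d)) : ‖x‖ ^ 2 = ∑ i, (x i) ^ 2 := by
  rw [EuclideanSpace.norm_eq, Real.sq_sqrt (Finset.sum_nonneg fun i _ => sq_nonneg _)]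
  simp [Real.norm_eq_abs, sq_abs]

lemma costE_pair {d : ℕ} (c₀ c₁ y : EuclideanSpace ℝ (Fin d)) :
    costE ![c₀, c₁] y = min (‖y - c₀‖ ^ 2) (‖y - c₁‖ ^ 2) := by
  unfold costE
  apply le_antisymm
  · apply le_min
    · exact (ciInf_le (Set.Finite.bddBelow (Set.finite_range _)) 0).trans_eq (by simp)
    · exact (ciInf_le (Set.Finite.bddBelow (Set.finite_range _)) 1).trans_eq (by simp)
  · apply le_ciInf
    intro j
    fin_cases j
    · simpa using min_le_left _ _
    · simpa using min_le_right _ _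

lemma normsq_sub_single {d : ℕ} (y : EuclideanSpace ℝ (Fin d)) (i : Fin d) (s : ℝ) :
    ‖y - s • EuclideanSpace.single i (1 : ℝ)‖ ^ 2
      = (∑ j, (y j) ^ 2) - 2 * s * y i + s ^ 2 := by
  rw [normsq]
  have h : ∀ j, ((y - s • EuclideanSpace.single i (1 : ℝ)) j) ^ 2
      = (y j) ^ 2 + (if j = i then (-(2 * s * y j) + s ^ 2) else 0) := by
    intro j
    have : (y - s • EuclideanSpace.single i (1 : ℝ)) j
        = y j - s * (if j = i then (1:ℝ) else 0) := by
      simp [EuclideanSpace.single_apply]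
    rw [this]
    by_cases h : j = i <;> simp [h] <;> ring
  rw [Finset.sum_congr rfl fun j _ => h j, Finset.sum_add_distrib,
    Finset.sum_ite_eq' Finset.univ i (fun j => -(2 * s * y j) + s ^ 2)]
  simp
  ring

lemma min_neg_self_eq (t : ℝ) : min (-t) t = -|t| := by
  rcases le_total 0 t with h | h
  · rw [abs_of_nonneg h, min_eq_left (by linarith)]
  · rw [abs_of_nonpos h, min_eq_right (by linarith), neg_neg]

theorem stmt_8 (d : ℕ) (hd : 0 < d) (κ : ℝ) (hκ : 0 < κ)
    (y : EuclideanSpace ℝ (Fin d)) :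
    ∑ i : Fin d,
        costE ![(d * κ) • EuclideanSpace.single i (1 : ℝ),
                (-(d * κ)) • EuclideanSpace.single i (1 : ℝ)] y =
      ((d : ℝ) ^ 3 - (d : ℝ) ^ 2) * κ ^ 2 + d * ‖y - κ • sgnVecE y‖ ^ 2 := by
  set S : ℝ := ∑ j, (y j) ^ 2 with hS
  set A : ℝ := ∑ j, |y j| with hA
  have hdκ : (0:ℝ) ≤ d * κ := by positivity
  have hcost : ∀ i : Fin d,
      costE ![(d * κ) • EuclideanSpace.single i (1 : ℝ),
              (-(d * κ)) • EuclideanSpace.single i (1 : ℝ)] y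
        = S + (d * κ) ^ 2 - 2 * (d * κ) * |y i| := by
    intro i
    rw [costE_pair, normsq_sub_single, normsq_sub_single]
    have e1 : S - 2 * (d * κ) * y i + (d * κ) ^ 2
        = (S + (d * κ) ^ 2) + -(2 * (d * κ) * y i) := by ring
    have e2 : S - 2 * (-(d * κ)) * y i + (-(d * κ)) ^ 2
        = (S + (d * κ) ^ 2) + (2 * (d * κ) * y i) := by ring
    rw [e1, e2, min_add_add_left, min_neg_self_eq, abs_mul, abs_of_nonneg (by positivity : (0:ℝ) ≤ 2 * (d*κ))]
    ring
  have hrhs : ‖y - κ • sgnVecE y‖ ^ 2 = S - 2 * κ * A + d * κ ^ 2 := by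
    rw [normsq]
    have h : ∀ j : Fin d, ((y - κ • sgnVecE y) j) ^ 2 = (y j) ^ 2 - 2 * κ * |y j| + κ ^ 2 := by
      intro j
      have hj : (y - κ • sgnVecE y) j = y j - κ * sgn (y j) := by
        simp [sgnVecE]
      rw [hj]
      unfold sgn
      rcases le_or_gt 0 (y j) with h | h
      · rw [if_pos h, abs_of_nonneg h]; ring
      · rw [if_neg (not_le.mpr h), abs_of_neg h]; ring
    rw [Finset.sum_congr rfl fun j _ => h j]
    simp [Finset.sum_add_distrib, Finset.sum_sub_distrib, ← Finset.mul_sum, hS, hA]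
  rw [Finset.sum_congr rfl fun i _ => hcost i, hrhs]
  simp [Finset.sum_add_distrib, Finset.sum_sub_distrib, ← Finset.mul_sum, hA]
  ring
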